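/- The sum over all subsets γ of A of the elements e_γ = (∏_{a ∉ γ, increasing}(1 - a)) · (∏_{a ∈ γ, decreasing} a) equals 1, and this identity already holds in the free associative ℤ-algebra on A. -/

import Mathlib

noncomputable section

open FreeMonoid

/-- The defining relations of the stylic congruence: the Knuth (plactic)
relations together with the idempotent relations `a² ≡ a`. -/
inductive StylicRel (A : Type*) [LinearOrder A] : FreeMonoid A → FreeMonoid A → Prop
  | knuth1 {a b c : A} : a < b → b < c →
      StylicRel A (ofList [b, a, c]) (ofList [b, c, a])
  | knuth2 {a b c : A} : a < b → b < c →
      StylicRel A (ofList [a, c, b]) (ofList [c, a, b])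
  | knuth3 {a b : A} : a < b →
      StylicRel A (ofList [b, a, b]) (ofList [b, b, a])
  | knuth4 {a b : A} : a < b →
      StylicRel A (ofList [a, b, a]) (ofList [b, a, a])
  | idem (a : A) : StylicRel A (ofList [a, a]) (ofList [a])

/-- The stylic congruence on the free monoid `A*`. -/
def stylCon (A : Type*) [LinearOrder A] : Con (FreeMonoid A) := conGen (StylicRel A)

/-- The stylic monoid `Styl(A)`. -/
abbrev Styl (A : Type*) [LinearOrder A] := (stylCon A).Quotient

/-- The image of a letter `a` in the stylic algebra `ℤStyl(A)`. -/
def styGen {A : Type*} [LinearOrder A] (a : A) : MonoidAlgebra ℤ (Styl A) :=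
  MonoidAlgebra.of ℤ (Styl A) ((stylCon A).mk' (FreeMonoid.of a))

/-- The idempotent `e_γ = (∏_{a∉γ}^{↗} (1-a)) · (∏_{a∈γ}^{↘} a)` of `ℤStyl(A)`
associated with a column (subset) `γ ⊆ A`. -/
def eIdem {A : Type*} [LinearOrder A] [Fintype A] (γ : Finset A) :
    MonoidAlgebra ℤ (Styl A) :=
  (((γᶜ).sort (· ≤ ·)).map (fun a => 1 - styGen a)).prod *
    ((γ.sort (· ≤ ·)).reverse.map styGen).prod

/-- The analogue of `e_γ` in the free associative algebra `ℤ⟨A⟩`. -/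
def eFree {A : Type*} [LinearOrder A] [Fintype A] (γ : Finset A) :
    FreeAlgebra ℤ A :=
  (((γᶜ).sort (· ≤ ·)).map (fun a => 1 - FreeAlgebra.ι ℤ a)).prod *
    ((γ.sort (· ≤ ·)).reverse.map (FreeAlgebra.ι ℤ)).prod

open Finset in
lemma key_sum {A : Type*} [LinearOrder A] {R : Type*} [Ring R] (f : A → R) (s : Finset A) :
    ∑ γ ∈ s.powerset,
      (((s \ γ).sort (· ≤ ·)).map (fun a => 1 - f a)).prod *
        ((γ.sort (· ≤ ·)).reverse.map f).prod = 1 := by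
  classical
  induction s using Finset.induction_on_min with
  | empty => simp
  | insert a s hmin ih =>
    have ha : a ∉ s := fun h => lt_irrefl a (hmin a h)
    rw [Finset.sum_powerset_insert ha]
    have h1 : ∀ γ ∈ s.powerset,
        (((insert a s \ γ).sort (· ≤ ·)).map (fun a => 1 - f a)).prod *
          ((γ.sort (· ≤ ·)).reverse.map f).prod =
        (1 - f a) * ((((s \ γ).sort (· ≤ ·)).map (fun a => 1 - f a)).prod *
          ((γ.sort (· ≤ ·)).reverse.map f).prod) := by
      intro γ hγ
      rw [Finset.mem_powerset] at hγ
      have haγ : a ∉ γ := fun h => lt_irrefl a (hmin a (hγ h))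
      have : insert a s \ γ = insert a (s \ γ) := by
        rw [Finset.insert_sdiff_of_notMem _ haγ]
      rw [this, Finset.sort_insert _ (fun b hb => (hmin b (Finset.mem_sdiff.1 hb).1).le)
        (fun h => ha (Finset.mem_sdiff.1 h).1), List.map_cons, List.prod_cons, mul_assoc]
    have h2 : ∀ γ ∈ s.powerset,
        (((insert a s \ insert a γ).sort (· ≤ ·)).map (fun a => 1 - f a)).prod *
          (((insert a γ).sort (· ≤ ·)).reverse.map f).prod =
        ((((s \ γ).sort (· ≤ ·)).map (fun a => 1 - f a)).prod *
          ((γ.sort (· ≤ ·)).reverse.map f).prod) * f a := by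
      intro γ hγ
      rw [Finset.mem_powerset] at hγ
      have haγ : a ∉ γ := fun h => lt_irrefl a (hmin a (hγ h))
      have hd : insert a s \ insert a γ = s \ γ := by
        ext x
        simp only [Finset.mem_sdiff, Finset.mem_insert]
        constructor
        · rintro ⟨hx1 | hx1, hx2⟩
          · exact absurd (Or.inl hx1) hx2
          · exact ⟨hx1, fun h => hx2 (Or.inr h)⟩
        · rintro ⟨hx1, hx2⟩
          exact ⟨Or.inr hx1, fun h => h.elim (fun h' => ha (h' ▸ hx1)) hx2⟩
      rw [hd, Finset.sort_insert _ (fun b hb => (hmin b (hγ hb)).le) haγ,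
        List.reverse_cons, List.map_append, List.prod_append]
      simp [mul_assoc]
    rw [Finset.sum_congr rfl h1, Finset.sum_congr rfl h2, ← Finset.mul_sum,
      ← Finset.sum_mul, ih]
    rw [mul_one, one_mul, sub_add_cancel]

/-- Theorem `system`, part 2: `∑_γ e_γ = 1`, and the
identity already holds in the algebra of noncommutative polynomials. -/
theorem sum_eIdem_eq_one {A : Type*} [LinearOrder A] [Fintype A] :
    (∑ γ : Finset A, eFree γ = 1) ∧ (∑ γ : Finset A, eIdem (A := A) γ = 1) := by
  have huniv : (Finset.univ : Finset (Finset A)) = Finset.univ.powerset :=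
    Finset.powerset_univ.symm
  constructor
  · rw [huniv]
    simp only [eFree, Finset.compl_eq_univ_sdiff]
    exact key_sum _ _
  · rw [huniv]
    simp only [eIdem, Finset.compl_eq_univ_sdiff]
    exact key_sum _ _
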